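/- For any type x, the normalization constant satisfies λ_x = ∏_i d_{A_i}^{−K_x(A_i)}, where the product runs over the elementary types A_i occurring in x, and K_x(A_i) is the parity (mod 2) of the number of arrows '→' plus open parentheses '(' appearing to the right of A_i in the expression of x. In particular λ_x I_x is a deterministic event of type x. -/

import Mathlib

open Matrix Kronecker
open scoped ComplexOrder

/-- Types of higher-order quantum theory. The trivial type `I` is `elem 1`. -/
inductive QT where
  | elem (n : ℕ)
  | arrow (x y : QT)

/-- The index type of the Hilbert space `H_x` associated to a type `x`. -/
def Idx : QT → Type
  | .elem n => Fin n
  | .arrow x y => Idx x × Idx y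

instance idxFintype : (x : QT) → Fintype (Idx x)
  | .elem n => inferInstanceAs (Fintype (Fin n))
  | .arrow x y =>
      letI := idxFintype x; letI := idxFintype y
      inferInstanceAs (Fintype (Idx x × Idx y))

instance idxDecEq : (x : QT) → DecidableEq (Idx x)
  | .elem n => inferInstanceAs (DecidableEq (Fin n))
  | .arrow x y =>
      letI := idxDecEq x; letI := idxDecEq y
      inferInstanceAs (DecidableEq (Idx x × Idx y))

/-- Partial trace over the first tensor factor. -/
noncomputable def ptrA {ι κ : Type} [Fintype ι]
    (M : Matrix (ι × κ) (ι × κ) ℂ) : Matrix κ κ ℂ :=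
  fun k l => ∑ i : ι, M (i, k) (i, l)

/-- Deterministic events of type `x`, defined recursively: for elementary types,
positive unit-trace operators; for `x → y`, positive operators `R` such that
`Tr_x[(Sᵀ ⊗ 1) R] ∈ Det y` for every `S ∈ Det x`. -/
noncomputable def Det : (x : QT) → Set (Matrix (Idx x) (Idx x) ℂ)
  | .elem n => {R | R.PosSemidef ∧ R.trace = 1}
  | .arrow x y =>
      setOf (fun (R : Matrix (Idx x × Idx y) (Idx x × Idx y) ℂ) =>
        R.PosSemidef ∧
        ∀ S ∈ Det x, ptrA ((Sᵀ ⊗ₖ (1 : Matrix (Idx y) (Idx y) ℂ)) * R) ∈ Det y)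

/-- The real subspace of Hermitian operators. -/
noncomputable def hermSub (ι : Type) [Fintype ι] [DecidableEq ι] :
    Submodule ℝ (Matrix ι ι ℂ) where
  carrier := {X | X.IsHermitian}
  add_mem' := fun ha hb => ha.add hb
  zero_mem' := Matrix.isHermitian_zero
  smul_mem' := fun c X hX => by
    show ((c • X)ᴴ = c • X)
    rw [Matrix.conjTranspose_smul, star_trivial, hX.eq]

/-- The real subspace of traceless Hermitian operators. -/
noncomputable def tlHermSub (ι : Type) [Fintype ι] [DecidableEq ι] :
    Submodule ℝ (Matrix ι ι ℂ) where
  carrier := {X | X.IsHermitian ∧ X.trace = 0}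
  add_mem' := fun ha hb => ⟨ha.1.add hb.1, by rw [trace_add, ha.2, hb.2, add_zero]⟩
  zero_mem' := ⟨Matrix.isHermitian_zero, Matrix.trace_zero ι ℂ⟩
  smul_mem' := fun c X hX =>
    ⟨by show ((c • X)ᴴ = c • X)
        rw [Matrix.conjTranspose_smul, star_trivial, hX.1.eq],
     by rw [trace_smul, hX.2, smul_zero]⟩

/-- The Hilbert–Schmidt orthogonal complement of `S` inside `B`. -/
noncomputable def perpWithin {ι : Type} [Fintype ι] [DecidableEq ι]
    (S B : Submodule ℝ (Matrix ι ι ℂ)) : Submodule ℝ (Matrix ι ι ℂ) where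
  carrier := {Z | Z ∈ B ∧ ∀ Y ∈ S, (Y * Z).trace = 0}
  add_mem' := fun ha hb =>
    ⟨B.add_mem ha.1 hb.1, fun Y hY => by
      rw [mul_add, trace_add, ha.2 Y hY, hb.2 Y hY, add_zero]⟩
  zero_mem' := ⟨B.zero_mem, fun Y _ => by simp⟩
  smul_mem' := fun c Z hZ =>
    ⟨B.smul_mem c hZ.1, fun Y hY => by
      rw [Matrix.mul_smul, trace_smul, hZ.2 Y hY, smul_zero]⟩

/-- Tensor product of operator subspaces, spanned by Kronecker products. -/
noncomputable def tensorSub {ι κ : Type} [Fintype ι] [DecidableEq ι]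
    [Fintype κ] [DecidableEq κ]
    (P : Submodule ℝ (Matrix ι ι ℂ)) (Q : Submodule ℝ (Matrix κ κ ℂ)) :
    Submodule ℝ (Matrix (ι × κ) (ι × κ) ℂ) :=
  Submodule.span ℝ {A | ∃ X ∈ P, ∃ Y ∈ Q, A = X ⊗ₖ Y}

/-- The one-dimensional subspace `L_e` spanned by the identity. -/
noncomputable def idSub (ι : Type) [Fintype ι] [DecidableEq ι] :
    Submodule ℝ (Matrix ι ι ℂ) :=
  Submodule.span ℝ {(1 : Matrix ι ι ℂ)}

/-- The subspace `Δ_x` of traceless Hermitian operators characterizing the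
deterministic events of type `x`:
`Δ_A = Traceless(H_A)` for elementary `A`, and
`Δ_{x→y} = [Herm(H_x) ⊗ Δ_y] ⊕ [Δ̄_x ⊗ Δ_y^⊥]`, where `Δ̄_x` is the complement of
`Δ_x` inside the traceless Hermitian operators and `Δ_y^⊥` its orthogonal
complement inside the Hermitian operators. -/
noncomputable def Delta : (x : QT) → Submodule ℝ (Matrix (Idx x) (Idx x) ℂ)
  | .elem n => tlHermSub (Fin n)
  | .arrow x y =>
      (tensorSub (hermSub (Idx x)) (Delta y) ⊔
        tensorSub (perpWithin (Delta x) (tlHermSub (Idx x)))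
          (perpWithin (Delta y) (hermSub (Idx y))) :
        Submodule ℝ (Matrix (Idx x × Idx y) (Idx x × Idx y) ℂ))

/-- The normalization constant `λ_x`: `λ_A = 1/d_A`, `λ_{x→y} = λ_y/(d_x λ_x)`. -/
noncomputable def lam : QT → ℝ
  | .elem n => 1 / n
  | .arrow x y => lam y / (Fintype.card (Idx x) * lam x)

/-- All elementary systems occurring in `x` have nonzero dimension. -/
def posdims : QT → Prop
  | .elem n => 0 < n
  | .arrow x y => posdims x ∧ posdims y

/-- The product `∏_i d_{A_i}^{-K_x(A_i)}` over the elementary types occurring in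
`x`: the Boolean argument records the parity `K` of the number of arrows and open
parentheses to the right of the current subexpression; it is flipped on the input
(left) side of each arrow, and an elementary leaf contributes `d⁻¹` when the
parity is odd and `1` when it is even. -/
noncomputable def leafProd : QT → Bool → ℝ
  | .elem n, s => if s then (n : ℝ)⁻¹ else 1
  | .arrow x y, s => leafProd x (!s) * leafProd y s


section Aux

lemma psd_smul_one {ι : Type} [Fintype ι] [DecidableEq ι] {c : ℝ} (hc : 0 ≤ c) :
    ((c : ℂ) • (1 : Matrix ι ι ℂ)).PosSemidef := by
  rw [Matrix.smul_one_eq_diagonal]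
  refine Matrix.PosSemidef.diagonal (fun i => ?_)
  simpa using (by exact_mod_cast hc : (0:ℂ) ≤ (c:ℂ))

lemma ptrA_smul {ι κ : Type} [Fintype ι] (c : ℂ) (M : Matrix (ι × κ) (ι × κ) ℂ) :
    ptrA (c • M) = c • ptrA M := by
  funext k l
  simp [ptrA, Finset.mul_sum]

lemma ptrA_kron_one {ι κ : Type} [Fintype ι] [Fintype κ] [DecidableEq κ]
    (S : Matrix ι ι ℂ) :
    ptrA (Sᵀ ⊗ₖ (1 : Matrix κ κ ℂ)) = S.trace • (1 : Matrix κ κ ℂ) := by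
  funext k l
  simp [ptrA, Matrix.trace, Matrix.diag, Finset.sum_mul]

lemma trace_ptrA {ι κ : Type} [Fintype ι] [Fintype κ] (M : Matrix (ι × κ) (ι × κ) ℂ) :
    (ptrA M).trace = M.trace := by
  simp only [ptrA, Matrix.trace, Matrix.diag, Fintype.sum_prod_type]
  exact Finset.sum_comm

lemma card_idx_elem (n : ℕ) : Fintype.card (Idx (QT.elem n)) = n :=
  (Fintype.card_congr (Equiv.refl _)).trans (Fintype.card_fin n)

lemma card_idx_arrow (x y : QT) :
    Fintype.card (Idx (QT.arrow x y)) = Fintype.card (Idx x) * Fintype.card (Idx y) :=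
  (Fintype.card_congr (Equiv.refl _)).trans (Fintype.card_prod _ _)

lemma card_idx_pos : ∀ x : QT, posdims x → 0 < Fintype.card (Idx x)
  | .elem n, h => by rw [card_idx_elem]; exact h
  | .arrow x y, ⟨hx, hy⟩ => by
      rw [card_idx_arrow]
      exact Nat.mul_pos (card_idx_pos x hx) (card_idx_pos y hy)

theorem main_aux : ∀ x : QT, posdims x →
    0 < lam x ∧ lam x = leafProd x true ∧
    leafProd x false = ((Fintype.card (Idx x) : ℝ) * lam x)⁻¹ ∧
    (∀ S ∈ Det x, S.trace = (((Fintype.card (Idx x) : ℝ) * lam x : ℝ) : ℂ)) ∧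
    ((lam x : ℂ) • (1 : Matrix (Idx x) (Idx x) ℂ)) ∈ Det x
  | .elem n, hn => by
    have hn' : (0:ℝ) < n := by exact_mod_cast hn
    have hnC : (n : ℂ) ≠ 0 := by exact_mod_cast hn'.ne'
    refine ⟨by show (0:ℝ) < 1 / (n:ℝ); positivity,
      by simp [lam, leafProd, one_div], ?_, ?_, ?_⟩
    · simp [lam, leafProd, card_idx_elem]
      field_simp
    · intro S hS
      obtain ⟨_, htr⟩ := hS
      rw [htr, card_idx_elem]
      rw [lam]
      push_cast
      field_simp
    · refine ⟨psd_smul_one (by rw [lam]; positivity), ?_⟩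
      rw [Matrix.trace_smul, Matrix.trace_one, lam]
      have : (Fintype.card (Idx (QT.elem n)) : ℂ) = (n : ℂ) := by
        rw [card_idx_elem]
      rw [smul_eq_mul, this]
      push_cast
      field_simp
  | .arrow x y, ⟨hx, hy⟩ => by
    obtain ⟨hxpos, hxleaf, hxleaf', hxtr, hxdet⟩ := main_aux x hx
    obtain ⟨hypos, hyleaf, hyleaf', hytr, hydet⟩ := main_aux y hy
    have hdx : (0:ℝ) < (Fintype.card (Idx x) : ℝ) := by
      exact_mod_cast card_idx_pos x hx
    have hdy : (0:ℝ) < (Fintype.card (Idx y) : ℝ) := by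
      exact_mod_cast card_idx_pos y hy
    have hlam : lam (QT.arrow x y) = lam y / (Fintype.card (Idx x) * lam x) := rfl
    have hpos : 0 < lam (QT.arrow x y) := by
      rw [hlam]; positivity
    have hcard : (Fintype.card (Idx (QT.arrow x y)) : ℝ)
        = (Fintype.card (Idx x) : ℝ) * (Fintype.card (Idx y) : ℝ) := by
      rw [card_idx_arrow]; push_cast; ring
    refine ⟨hpos, ?_, ?_, ?_, ?_⟩
    · show lam (QT.arrow x y) = leafProd x (!true) * leafProd y true
      rw [hlam, ← hyleaf]
      show _ = leafProd x false * lam y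
      rw [hxleaf']
      field_simp
    · show leafProd x (!false) * leafProd y false
        = ((Fintype.card (Idx (QT.arrow x y)) : ℝ) * lam (QT.arrow x y))⁻¹
      show leafProd x true * leafProd y false = _
      rw [← hxleaf, hyleaf', hlam, hcard]
      field_simp
    · -- trace of deterministic events
      intro S hS
      obtain ⟨hSpsd, hScond⟩ := hS
      have h1 := hScond _ hxdet
      have htr := hytr _ h1
      have heq : ((lam x : ℂ) • (1 : Matrix (Idx x) (Idx x) ℂ))ᵀ
          ⊗ₖ (1 : Matrix (Idx y) (Idx y) ℂ)
          = (lam x : ℂ) • (1 : Matrix (Idx x × Idx y) (Idx x × Idx y) ℂ) := by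
        rw [Matrix.transpose_smul, Matrix.transpose_one, Matrix.smul_kronecker,
          Matrix.one_kronecker_one]
      erw [heq, smul_mul_assoc, one_mul, ptrA_smul, Matrix.trace_smul, trace_ptrA]
        at htr
      have hlx : (lam x : ℂ) ≠ 0 := by
        exact_mod_cast ne_of_gt hxpos
      have : S.trace = ((((Fintype.card (Idx y) : ℝ)) * lam y : ℝ) : ℂ) / (lam x : ℂ) := by
        rw [smul_eq_mul] at htr
        field_simp at htr ⊢
        exact htr
      have hdxC : ((Fintype.card (Idx x) : ℕ) : ℂ) ≠ 0 :=
        Nat.cast_ne_zero.mpr (card_idx_pos x hx).ne'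
      rw [this, hcard, hlam]
      push_cast
      rw [← mul_div_assoc, div_eq_div_iff hlx (mul_ne_zero hdxC hlx)]
      ring
    · -- lam • 1 is deterministic
      refine ⟨psd_smul_one (le_of_lt hpos), ?_⟩
      intro S hS
      have htrS := hxtr S hS
      have heq : (Sᵀ ⊗ₖ (1 : Matrix (Idx y) (Idx y) ℂ))
          * ((lam (QT.arrow x y) : ℂ) • (1 : Matrix (Idx x × Idx y) (Idx x × Idx y) ℂ))
          = (lam (QT.arrow x y) : ℂ) • (Sᵀ ⊗ₖ (1 : Matrix (Idx y) (Idx y) ℂ)) := by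
        rw [mul_smul_comm, mul_one]
      erw [heq, ptrA_smul, ptrA_kron_one, htrS, smul_smul]
      have : (lam (QT.arrow x y) : ℂ) * ((((Fintype.card (Idx x) : ℝ) * lam x : ℝ)) : ℂ)
          = (lam y : ℂ) := by
        have hdxC : ((Fintype.card (Idx x) : ℕ) : ℂ) ≠ 0 :=
          Nat.cast_ne_zero.mpr (card_idx_pos x hx).ne'
        have hlxC : ((lam x : ℝ) : ℂ) ≠ 0 := by exact_mod_cast hxpos.ne'
        rw [hlam]
        push_cast
        exact div_mul_cancel₀ _ (mul_ne_zero hdxC hlxC)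
      rw [this]
      exact hydet

end Aux

/-- `λ_x = ∏_i d_{A_i}^{-K_x(A_i)}`, and `λ_x I_x` is a deterministic event of
type `x`. -/
theorem lam_eq_leafProd_and_smul_one_det (x : QT) (hx : posdims x) :
    lam x = leafProd x true ∧
    ((lam x : ℂ) • (1 : Matrix (Idx x) (Idx x) ℂ)) ∈ Det x := by
  obtain ⟨_, h2, _, _, h5⟩ := main_aux x hx
  exact ⟨h2, h5⟩
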